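/- Let W be a random variable with the distribution of a centered Gaussian with variance t > 0, let f: ℝ → ℝ be measurable with |f| ≤ R and supp f ⊆ [−S, S], and let X: ℝ × Ω → ℝ be a jointly measurable random function with y ↦ X(y,·) nondecreasing a.s. and X(y,·) − y distributed as W for each y. Then for every M > S, E|∫_{|y| ≥ M} f(X(y,·)) dy| ≤ 2R · Σ_{k ≥ ⌊M⌋} P{W ≥ k − S}, and the right-hand side tends to 0 as M → ∞. -/

import Mathlib

open MeasureTheory ProbabilityTheory Filter Real
open scoped ENNReal NNReal

lemma aux_exp_fin (t : NNReal) (ht : 0 < t) :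
    ∫⁻ x, ENNReal.ofReal (Real.exp x) ∂(gaussianReal 0 t) < ⊤ := by
  have ht' : (0:ℝ) < (t:ℝ) := ht
  have hint : Integrable (fun x : ℝ => gaussianPDFReal 0 t x * Real.exp x) := by
    have h0 : (0:ℝ) < (2 * (t:ℝ))⁻¹ := by positivity
    have h1 : Integrable (fun x : ℝ => Real.exp (-(2*(t:ℝ))⁻¹ * x ^ 2)) :=
      integrable_exp_neg_mul_sq h0
    have h2 := (h1.comp_sub_right (t:ℝ)).const_mul
      ((Real.sqrt (2*Real.pi*(t:ℝ)))⁻¹ * Real.exp ((t:ℝ)/2))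
    have key : ∀ x:ℝ, Real.exp ((t:ℝ)/2) * Real.exp (-(2*(t:ℝ))⁻¹ * (x - t)^2)
        = Real.exp (-x^2/(2*(t:ℝ))) * Real.exp x := by
      intro x
      rw [← Real.exp_add, ← Real.exp_add]
      congr 1
      field_simp
      ring
    refine h2.congr (Filter.Eventually.of_forall fun x => ?_)
    simp only [gaussianPDFReal, sub_zero]
    rw [mul_assoc, key x]
    ring
  have hmeas := measurable_gaussianPDF 0 t
  rw [gaussianReal_of_var_ne_zero 0 ht.ne',
    lintegral_withDensity_eq_lintegral_mul _ hmeas (by fun_prop)]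
  have : ∀ x : ℝ, (gaussianPDF 0 t * fun x => ENNReal.ofReal (Real.exp x)) x
      = ENNReal.ofReal (gaussianPDFReal 0 t x * Real.exp x) := by
    intro x
    simp [gaussianPDF, ENNReal.ofReal_mul (gaussianPDFReal_nonneg 0 t x)]
  simp_rw [this]
  exact hint.lintegral_lt_top

lemma aux_tail (t : NNReal) (ht : 0 < t) (c : ℝ) :
    gaussianReal 0 t (Set.Ici c)
      ≤ ENNReal.ofReal (Real.exp (-c)) * ∫⁻ x, ENNReal.ofReal (Real.exp x) ∂(gaussianReal 0 t) := by
  set ν := gaussianReal 0 t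
  have h1 : ENNReal.ofReal (Real.exp c) * ν (Set.Ici c)
      ≤ ∫⁻ x, ENNReal.ofReal (Real.exp x) ∂ν := by
    refine le_trans ?_ (mul_meas_ge_le_lintegral₀ (by fun_prop) (ENNReal.ofReal (Real.exp c)))
    refine mul_le_mul_right (measure_mono fun x hx => ?_) _
    exact ENNReal.ofReal_le_ofReal (Real.exp_le_exp.2 hx)
  calc ν (Set.Ici c) = ENNReal.ofReal (Real.exp (-c)) *
        (ENNReal.ofReal (Real.exp c) * ν (Set.Ici c)) := by
        rw [← mul_assoc, ← ENNReal.ofReal_mul (Real.exp_nonneg _), ← Real.exp_add,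
          neg_add_cancel, Real.exp_zero, ENNReal.ofReal_one, one_mul]
    _ ≤ _ := mul_le_mul_right h1 _

lemma aux_sum (t : NNReal) (ht : 0 < t) (S : ℝ) :
    ∑' k : ℕ, gaussianReal 0 t (Set.Ici ((k:ℝ) - S)) ≠ ⊤ := by
  set C := ∫⁻ x, ENNReal.ofReal (Real.exp x) ∂(gaussianReal 0 t) with hC
  have hCfin : C ≠ ⊤ := (aux_exp_fin t ht).ne
  have hbound : ∀ k : ℕ, gaussianReal 0 t (Set.Ici ((k:ℝ) - S))
      ≤ (ENNReal.ofReal (Real.exp S) * C) * (ENNReal.ofReal (Real.exp (-1))) ^ k := by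
    intro k
    refine (aux_tail t ht _).trans (le_of_eq ?_)
    rw [← ENNReal.ofReal_pow (Real.exp_nonneg _), ← Real.exp_nat_mul]
    rw [mul_comm (ENNReal.ofReal (Real.exp S)) C, mul_assoc,
      ← ENNReal.ofReal_mul (Real.exp_nonneg _), ← Real.exp_add, mul_comm C]
    ring_nf
    rfl
  refine ne_top_of_le_ne_top ?_ (ENNReal.tsum_le_tsum hbound)
  rw [ENNReal.tsum_mul_left, ENNReal.tsum_geometric]
  refine ENNReal.mul_ne_top (ENNReal.mul_ne_top ENNReal.ofReal_ne_top hCfin) ?_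
  rw [ENNReal.inv_ne_top]
  simp only [ne_eq, tsub_eq_zero_iff_le, not_le]
  exact ENNReal.ofReal_lt_one.2 (Real.exp_lt_one_iff.2 (by norm_num))

lemma aux_symm (t : NNReal) (ht : 0 < t) (a : ℝ) :
    gaussianReal 0 t (Set.Iic a) = gaussianReal 0 t (Set.Ici (-a)) := by
  have hmap : (gaussianReal 0 t).map (fun x => (-1:ℝ) * x) = gaussianReal 0 t := by
    rw [gaussianReal_map_const_mul (-1)]
    norm_num
  conv_lhs => rw [← hmap]
  rw [Measure.map_apply (by fun_prop) measurableSet_Iic]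
  congr 1
  ext x
  simp [neg_le]

lemma aux_ici_sum (τ : ℝ → ℝ≥0∞) (hτ : Antitone τ) (n : ℕ) :
    ∫⁻ y in Set.Ici (n:ℝ), τ y ∂volume ≤ ∑' j : ℕ, τ ((n + j : ℕ) : ℝ) := by
  have hset : Set.Ici (n:ℝ) = ⋃ j : ℕ, Set.Ico (((n+j:ℕ)):ℝ) (((n+j+1:ℕ)):ℝ) := by
    ext y
    simp only [Set.mem_Ici, Set.mem_iUnion, Set.mem_Ico]
    constructor
    · intro hy
      have h0 : (0:ℝ) ≤ y := le_trans (Nat.cast_nonneg n) hy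
      have hn : n ≤ ⌊y⌋₊ := Nat.le_floor hy
      refine ⟨⌊y⌋₊ - n, ?_, ?_⟩
      · rw [Nat.add_sub_cancel' hn]; exact Nat.floor_le h0
      · rw [Nat.add_sub_cancel' hn]; push_cast; exact Nat.lt_floor_add_one y
    · rintro ⟨j, h1, h2⟩
      exact le_trans (by exact_mod_cast Nat.le_add_right n j) h1
  rw [hset]
  refine (lintegral_iUnion_le _ _).trans (ENNReal.tsum_le_tsum fun j => ?_)
  calc ∫⁻ y in Set.Ico (((n+j:ℕ)):ℝ) (((n+j+1:ℕ)):ℝ), τ y ∂volume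
      ≤ ∫⁻ _ in Set.Ico (((n+j:ℕ)):ℝ) (((n+j+1:ℕ)):ℝ), τ ((n+j:ℕ):ℝ) ∂volume :=
        setLIntegral_mono' measurableSet_Ico fun y hy => hτ hy.1
    _ = τ ((n+j:ℕ):ℝ) := by
        rw [setLIntegral_const, Real.volume_Ico]
        push_cast
        simp

/-- Tail bound for the integral of `f ∘ X` outside `[-M, M]`, for a monotone random
function with Gaussian one-point increments, and its vanishing as `M → ∞`. -/
theorem stmt_12 {Ω : Type*} {m : MeasurableSpace Ω} (P : Measure Ω)
    [IsProbabilityMeasure P]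
    (t : NNReal) (ht : 0 < t)
    (W : Ω → ℝ) (hW : Measurable W) (hWlaw : P.map W = gaussianReal 0 t)
    (f : ℝ → ℝ) (hf : Measurable f)
    (R S : ℝ) (hS : 0 < S) (hR : ∀ y, |f y| ≤ R)
    (hsupp : Function.support f ⊆ Set.Icc (-S) S)
    (X : ℝ → Ω → ℝ)
    (hXmeas : Measurable (Function.uncurry X))
    (hmono : ∀ᵐ ω ∂P, Monotone fun y => X y ω)
    (hlaw : ∀ y : ℝ, P.map (fun ω => X y ω - y) = P.map W)
    (G : ℝ → ℝ)
    (hG : ∀ M : ℝ, G M = 2 * R * ∑' k : ℕ,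
        if (⌊M⌋ : ℝ) ≤ (k : ℝ)
        then (P {ω | (k : ℝ) - S ≤ W ω}).toReal else 0) :
    (∀ M : ℝ, S < M →
      (∫ ω, |∫ y in {y : ℝ | M ≤ |y|}, f (X y ω)| ∂P) ≤ G M) ∧
    Tendsto G atTop (nhds 0) := by
  classical
  set ν := gaussianReal 0 t with hν
  have hR0 : 0 ≤ R := le_trans (abs_nonneg _) (hR 0)
  set τ : ℝ → ℝ≥0∞ := fun c => ν (Set.Ici c) with hτdef
  have hτ_anti : Antitone τ := fun a b hab => measure_mono (Set.Ici_subset_Ici.2 hab)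
  have hτ_meas : Measurable τ := hτ_anti.measurable
  have hτ_ne_top : ∀ c, τ c ≠ ⊤ := fun c => (measure_lt_top ν _).ne
  have hτW : ∀ c : ℝ, P {ω | c ≤ W ω} = τ c := by
    intro c
    have h1 : {ω | c ≤ W ω} = W ⁻¹' (Set.Ici c) := rfl
    rw [h1, ← Measure.map_apply hW measurableSet_Ici, hWlaw]
  have hXy : ∀ y, Measurable (X y) := fun y => hXmeas.comp measurable_prodMk_left
  have hXω : ∀ ω, Measurable fun y => X y ω := fun ω => hXmeas.comp measurable_prodMk_right
  have hmapy : ∀ y : ℝ, P.map (X y) = ν.map (· + y) := by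
    intro y
    have h1 : P.map (fun ω => X y ω - y) = ν := by rw [hlaw y, hWlaw]
    have h2 : ((· + y) ∘ fun ω => X y ω - y) = X y := by funext ω; simp
    rw [← h2, ← Measure.map_map (measurable_add_const y) ((hXy y).sub_const y), h1]
  set a : ℕ → ℝ := fun k => (τ ((k:ℝ) - S)).toReal with ha
  have ha_nonneg : ∀ k, 0 ≤ a k := fun k => ENNReal.toReal_nonneg
  have hsum' : ∀ S' : ℝ, ∑' k : ℕ, τ ((k:ℝ) - S') ≠ ⊤ := fun S' => aux_sum t ht S'
  have ha_summable : Summable a := ENNReal.summable_toReal (hsum' S)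
  have hGr : ∀ M : ℝ, 0 ≤ M → G M = 2 * R * ∑' i : ℕ, a (i + ⌊M⌋.toNat) := by
    intro M hM
    set n := ⌊M⌋.toNat with hn
    have hfloor : (⌊M⌋ : ℝ) = (n : ℝ) := by
      rw [hn]
      norm_cast
      exact (Int.toNat_of_nonneg (Int.floor_nonneg.2 hM)).symm
    have hb : ∀ k : ℕ, (if (⌊M⌋ : ℝ) ≤ (k:ℝ) then (P {ω | (k:ℝ) - S ≤ W ω}).toReal else 0)
        = (if n ≤ k then a k else 0) := by
      intro k
      rw [hfloor, hτW]
      simp [Nat.cast_le]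
      rfl
    rw [hG M]
    simp_rw [hb]
    congr 1
    have hbsum : Summable (fun k => if n ≤ k then a k else 0) := by
      refine ha_summable.of_nonneg_of_le (fun k => ?_) (fun k => ?_)
      · split <;> simp [ha_nonneg k]
      · split <;> simp [ha_nonneg k]
    calc ∑' k, (if n ≤ k then a k else 0)
        = (∑ i ∈ Finset.range n, (if n ≤ i then a i else 0)) +
            ∑' i, (if n ≤ i + n then a (i+n) else 0) := (Summable.sum_add_tsum_nat_add n hbsum).symm
      _ = ∑' i : ℕ, a (i + n) := by
          rw [Finset.sum_eq_zero, zero_add]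
          · exact tsum_congr fun i => if_pos (Nat.le_add_left n i)
          · intro i hi
            exact if_neg (by simpa using Finset.mem_range.1 hi)
  have hτy : ∀ y : ℝ, ∫⁻ ω, (‖f (X y ω)‖₊ : ℝ≥0∞) ∂P ≤ ENNReal.ofReal R * τ (|y| - S) := by
    intro y
    set s : Set ℝ := Set.Icc (-S) S with hs'
    have hsm : MeasurableSet (X y ⁻¹' s) := (hXy y) measurableSet_Icc
    have step1 : ∫⁻ ω, (‖f (X y ω)‖₊ : ℝ≥0∞) ∂P
        ≤ ∫⁻ ω, (X y ⁻¹' s).indicator (fun _ => ENNReal.ofReal R) ω ∂P := by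
      refine lintegral_mono fun ω => ?_
      by_cases hω : X y ω ∈ s
      · rw [Set.indicator_of_mem (show ω ∈ X y ⁻¹' s from hω), ← enorm_eq_nnnorm, Real.enorm_eq_ofReal_abs]
        exact ENNReal.ofReal_le_ofReal (hR _)
      · have hz : f (X y ω) = 0 := by
          by_contra hcon
          exact hω (hsupp hcon)
        rw [Set.indicator_of_notMem (show ω ∉ X y ⁻¹' s from hω), hz]
        simp
    have step2 : ∫⁻ ω, (X y ⁻¹' s).indicator (fun _ => ENNReal.ofReal R) ω ∂P
        = ENNReal.ofReal R * P (X y ⁻¹' s) := by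
      rw [lintegral_indicator hsm, setLIntegral_const]
    have step3 : P (X y ⁻¹' s) ≤ τ (|y| - S) := by
      rcases le_or_gt 0 y with hy | hy
      · have hsub : X y ⁻¹' s ⊆ X y ⁻¹' Set.Iic S := fun ω hω => hω.2
        have heq : P (X y ⁻¹' Set.Iic S) = ν (Set.Iic (S - y)) := by
          rw [← Measure.map_apply (hXy y) measurableSet_Iic, hmapy y,
            Measure.map_apply (measurable_add_const y) measurableSet_Iic]
          congr 1
          ext x
          simp only [Set.mem_preimage, Set.mem_Iic]
          constructor <;> intro <;> linarith
        rw [abs_of_nonneg hy]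
        refine (measure_mono hsub).trans ?_
        rw [heq, aux_symm t ht, neg_sub]
      · have hsub : X y ⁻¹' s ⊆ X y ⁻¹' Set.Ici (-S) := fun ω hω => hω.1
        have heq : P (X y ⁻¹' Set.Ici (-S)) = ν (Set.Ici (-S - y)) := by
          rw [← Measure.map_apply (hXy y) measurableSet_Ici, hmapy y,
            Measure.map_apply (measurable_add_const y) measurableSet_Ici]
          congr 1
          ext x
          simp only [Set.mem_preimage, Set.mem_Ici]
          constructor <;> intro <;> linarith
        rw [abs_of_neg hy]
        refine (measure_mono hsub).trans ?_
        rw [heq]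
        exact hτ_anti (by linarith)
    calc ∫⁻ ω, (‖f (X y ω)‖₊ : ℝ≥0∞) ∂P
        ≤ ENNReal.ofReal R * P (X y ⁻¹' s) := step2 ▸ step1
      _ ≤ ENNReal.ofReal R * τ (|y| - S) := mul_le_mul_right step3 _
  constructor
  · intro M hM
    have hM0 : (0:ℝ) ≤ M := le_of_lt (hS.trans hM)
    set n := ⌊M⌋.toNat with hn
    have hnM : (n : ℝ) ≤ M := by
      have h2 : ((n : ℕ) : ℝ) = ((⌊M⌋ : ℤ) : ℝ) := by
        exact_mod_cast congrArg (fun z : ℤ => (z : ℝ)) (Int.toNat_of_nonneg (Int.floor_nonneg.2 hM0))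
      rw [h2]
      exact Int.floor_le M
    set A : Set ℝ := {y : ℝ | M ≤ |y|} with hA
    have hAmeas : MeasurableSet A :=
      (continuous_abs.measurable) measurableSet_Ici
    set h : ℝ → ℝ≥0∞ := fun y => τ (|y| - S) with hh
    have hh_meas : Measurable h := hτ_meas.comp (continuous_abs.measurable.sub measurable_const)
    set T : ℝ≥0∞ := ∑' j : ℕ, τ (((n + j : ℕ) : ℝ) - S) with hT
    have hTne : T ≠ ⊤ := by
      have heq : ∀ j:ℕ, (((n+j:ℕ)):ℝ) - S = (j:ℝ) - (S - n) := by intro j; push_cast; ring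
      rw [hT]
      simp_rw [heq]
      exact hsum' (S - (n:ℝ))
    have hJ : ∫⁻ y in A, h y ∂volume ≤ 2 * T := by
      have hsubA : A ⊆ Set.Iic (-(n:ℝ)) ∪ Set.Ici (n:ℝ) := by
        intro y hy
        rcases le_or_gt 0 y with h0 | h0
        · right
          rw [Set.mem_Ici]
          have : |y| = y := abs_of_nonneg h0
          have hy' : M ≤ |y| := hy
          linarith [hnM]
        · left
          rw [Set.mem_Iic]
          have : |y| = -y := abs_of_neg h0
          have hy' : M ≤ |y| := hy
          linarith [hnM]
      have hpos : ∫⁻ y in Set.Ici (n:ℝ), h y ∂volume ≤ T := by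
        have hcong : ∀ y ∈ Set.Ici (n:ℝ), h y = τ (y - S) := by
          intro y hy
          have : |y| = y := abs_of_nonneg (le_trans (Nat.cast_nonneg n) hy)
          rw [hh]
          simp only [this]
        rw [setLIntegral_congr_fun measurableSet_Ici hcong]
        exact aux_ici_sum (fun c => τ (c - S)) (fun u v huv => hτ_anti (by linarith)) n
      have hneg : ∫⁻ y in Set.Iic (-(n:ℝ)), h y ∂volume
          = ∫⁻ y in Set.Ici (n:ℝ), h y ∂volume := by
        conv_lhs => rw [← Measure.map_neg_eq_self (volume : Measure ℝ),
          measurableEmbedding_neg.restrict_map, measurableEmbedding_neg.lintegral_map]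
        have h1 : ((Neg.neg : ℝ → ℝ) ⁻¹' Set.Iic (-(n:ℝ))) = Set.Ici (n:ℝ) := by
          ext x; simp
        have h2 : ∀ x : ℝ, h (-x) = h x := by
          intro x; rw [hh]; simp [abs_neg]
        rw [h1]
        simp_rw [h2]
      calc ∫⁻ y in A, h y ∂volume
          ≤ ∫⁻ y in Set.Iic (-(n:ℝ)) ∪ Set.Ici (n:ℝ), h y ∂volume :=
            lintegral_mono_set hsubA
        _ ≤ (∫⁻ y in Set.Iic (-(n:ℝ)), h y ∂volume) + ∫⁻ y in Set.Ici (n:ℝ), h y ∂volume :=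
            lintegral_union_le _ _ _
        _ ≤ T + T := by rw [hneg]; exact add_le_add hpos hpos
        _ = 2 * T := (two_mul T).symm
    set F : Ω → ℝ → ℝ≥0∞ := fun ω y => (‖f (X y ω)‖₊ : ℝ≥0∞) with hF
    have hFmeas : Measurable (Function.uncurry F) :=
      (hf.comp (hXmeas.comp measurable_swap)).enorm
    have hI : ∫⁻ ω, ∫⁻ y in A, F ω y ∂volume ∂P ≤ ENNReal.ofReal R * (2 * T) := by
      rw [lintegral_lintegral_swap hFmeas.aemeasurable]
      calc ∫⁻ y in A, ∫⁻ ω, F ω y ∂P ∂volume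
          ≤ ∫⁻ y in A, ENNReal.ofReal R * h y ∂volume := by
            refine lintegral_mono fun y => ?_
            exact hτy y
        _ = ENNReal.ofReal R * ∫⁻ y in A, h y ∂volume := lintegral_const_mul _ hh_meas
        _ ≤ _ := mul_le_mul_right hJ _
    set Φ : Ω → ℝ≥0∞ := fun ω => ∫⁻ y in A, F ω y ∂volume with hΦ
    have hΦmeas : Measurable Φ := hFmeas.lintegral_prod_right
    have hRHSne : ENNReal.ofReal R * (2 * T) ≠ ⊤ :=
      ENNReal.mul_ne_top ENNReal.ofReal_ne_top
        (ENNReal.mul_ne_top (by norm_num) hTne)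
    have hIne : ∫⁻ ω, Φ ω ∂P ≠ ⊤ := ne_top_of_le_ne_top hRHSne hI
    have hΦlt : ∀ᵐ ω ∂P, Φ ω < ⊤ := ae_lt_top hΦmeas hIne
    have hint : Integrable (fun ω => (Φ ω).toReal) P :=
      integrable_toReal_of_lintegral_ne_top hΦmeas.aemeasurable hIne
    have hptw : ∀ ω, |∫ y in A, f (X y ω)| ≤ (Φ ω).toReal := by
      intro ω
      have h1 : |∫ y in A, f (X y ω)| ≤ ∫ y in A, |f (X y ω)| ∂volume := by
        simpa [Real.norm_eq_abs] using
          norm_integral_le_integral_norm (μ := volume.restrict A) (f := fun y => f (X y ω))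
      have h2 : ∫ y in A, |f (X y ω)| ∂volume = (Φ ω).toReal := by
        have h3 := integral_norm_eq_lintegral_enorm (μ := volume.restrict A)
          (f := fun y => f (X y ω)) (hf.comp (hXω ω)).aestronglyMeasurable.restrict
        simp only [Real.norm_eq_abs] at h3
        exact h3
      linarith
    have hfinal : ∫ ω, |∫ y in A, f (X y ω)| ∂P ≤ (∫⁻ ω, Φ ω ∂P).toReal := by
      refine le_trans (integral_mono_of_nonneg (Filter.Eventually.of_forall fun ω => abs_nonneg _)
        hint (Filter.Eventually.of_forall hptw)) ?_
      rw [integral_toReal hΦmeas.aemeasurable hΦlt]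
    refine hfinal.trans ?_
    refine (ENNReal.toReal_mono hRHSne hI).trans ?_
    rw [hGr M hM0]
    rw [ENNReal.toReal_mul, ENNReal.toReal_mul, ENNReal.toReal_ofReal hR0]
    have hTt : T.toReal = ∑' i : ℕ, a (i + n) := by
      rw [hT, ENNReal.tsum_toReal_eq (fun j => hτ_ne_top _)]
      refine tsum_congr fun j => ?_
      rw [ha]
      norm_num
      congr 2
      push_cast
      ring
    rw [ENNReal.toReal_ofNat, hTt]
    exact le_of_eq (by ring)
  · have hr := tendsto_sum_nat_add a
    have hcomp : Tendsto (fun M : ℝ => ⌊M⌋.toNat) atTop atTop := by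
      refine tendsto_atTop_atTop.2 fun b => ⟨(b:ℝ), fun M hM => ?_⟩
      have h1 : (b:ℤ) ≤ ⌊M⌋ := Int.le_floor.2 (by exact_mod_cast hM)
      omega
    have h0 : Tendsto (fun M : ℝ => 2 * R * ∑' i : ℕ, a (i + ⌊M⌋.toNat)) atTop (nhds 0) := by
      have h1 := (hr.comp hcomp).const_mul (2*R)
      simpa using h1
    refine Tendsto.congr' ?_ h0
    filter_upwards [eventually_ge_atTop (0:ℝ)] with M hM
    exact (hGr M hM).symm
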